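/- Let V be a finite nonempty index set, T ∈ (0, ∞], and C₁ ∈ ℝ. Let f : V × [0,T) → ℝ be such that t ↦ f_i(t) is differentiable for each i ∈ V, let a_{ij} : [0,T) → ℝ (for i, j ∈ V) be continuous functions with a_{ij}(t) ≥ 0 for all i, j, t, and let Φ : ℝ → ℝ be locally Lipschitz. Assume that for all i ∈ V and t ∈ [0,T), d/dt f_i(t) ≥ Σ_{j∈V} a_{ij}(t)(f_j(t) − f_i(t)) + Φ(f_i(t)), and that f_i(0) ≥ C₁ for all i ∈ V. If φ : [0,T) → ℝ is differentiable with φ'(t) = Φ(φ(t)) for all t ∈ [0,T) and φ(0) = C₁, then f_i(t) ≥ φ(t) for all i ∈ V and t ∈ [0,T). -/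
import Mathlib

open Filter Set Topology

lemma locallyLipschitz_lipschitzOn_compact {Φ : ℝ → ℝ} (hΦ : LocallyLipschitz Φ)
    {K : Set ℝ} (hK : IsCompact K) :
    ∃ L : ℝ, 0 ≤ L ∧ ∀ x ∈ K, ∀ y ∈ K, |Φ x - Φ y| ≤ L * |x - y| := by
  choose c t hmem hlip using hΦ
  set u : ℝ → Set ℝ := fun x => interior (t x) with hu
  have hopen : ∀ x, IsOpen (u x) := fun x => isOpen_interior
  have hxu : ∀ x, x ∈ u x := fun x => mem_interior_iff_mem_nhds.2 (hmem x)
  have hlipu : ∀ x, LipschitzOnWith (c x) Φ (u x) := fun x => (hlip x).mono interior_subset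
  obtain ⟨sfin, hsfin⟩ := hK.elim_finite_subcover u hopen (fun x _ => mem_iUnion.2 ⟨x, hxu x⟩)
  -- Lebesgue number lemma for the finite cover
  have hcov : K ⊆ ⋃ i : {x : ℝ // x ∈ sfin}, u i := by
    intro x hx
    obtain ⟨j, hj, hxj⟩ := mem_iUnion₂.1 (hsfin hx)
    exact mem_iUnion.2 ⟨⟨j, hj⟩, hxj⟩
  obtain ⟨δ, hδ, hleb⟩ := lebesgue_number_lemma_of_metric (ι := {x : ℝ // x ∈ sfin})
    (c := fun i => u (i : ℝ)) hK (fun i => hopen _) hcov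
  obtain ⟨B, hB⟩ := hK.exists_bound_of_continuousOn
    ((LocallyLipschitz.continuous (fun x => ⟨c x, t x, hmem x, hlip x⟩)).continuousOn)
  set Lm : NNReal := sfin.sup c with hLm
  refine ⟨max (Lm : ℝ) (2 * max B 0 / δ), le_max_of_le_left Lm.coe_nonneg, ?_⟩
  intro x hx y hy
  rcases lt_or_ge (dist x y) δ with hd | hd
  · obtain ⟨i, hball⟩ := hleb x hx
    have hxi : x ∈ u i := hball (Metric.mem_ball_self hδ)
    have hyi : y ∈ u i := hball (by simpa [Metric.mem_ball, dist_comm] using hd)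
    have := (hlipu i).dist_le_mul x hxi y hyi
    have hci : (c i : ℝ) ≤ (Lm : ℝ) := by
      exact_mod_cast NNReal.coe_le_coe.2 (Finset.le_sup i.2)
    calc |Φ x - Φ y| = dist (Φ x) (Φ y) := (Real.dist_eq _ _).symm
      _ ≤ (c i : ℝ) * dist x y := this
      _ ≤ (Lm : ℝ) * |x - y| := by
          rw [Real.dist_eq] at *
          exact mul_le_mul hci le_rfl (abs_nonneg _) Lm.coe_nonneg
      _ ≤ max (Lm : ℝ) (2 * max B 0 / δ) * |x - y| :=
          mul_le_mul_of_nonneg_right (le_max_left _ _) (abs_nonneg _)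
  · have hBx : |Φ x| ≤ max B 0 := le_trans (hB x hx) (le_max_left _ _)
    have hBy : |Φ y| ≤ max B 0 := le_trans (hB y hy) (le_max_left _ _)
    have hdd : δ ≤ |x - y| := by rwa [Real.dist_eq] at hd
    have h1 : |Φ x - Φ y| ≤ 2 * max B 0 := by
      calc |Φ x - Φ y| ≤ |Φ x| + |Φ y| := abs_sub _ _
        _ ≤ 2 * max B 0 := by linarith
    calc |Φ x - Φ y| ≤ 2 * max B 0 := h1
      _ = 2 * max B 0 / δ * δ := by field_simp
      _ ≤ 2 * max B 0 / δ * |x - y| := by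
          apply mul_le_mul_of_nonneg_left hdd
          positivity
      _ ≤ max (Lm : ℝ) (2 * max B 0 / δ) * |x - y| :=
          mul_le_mul_of_nonneg_right (le_max_right _ _) (abs_nonneg _)

/-- Discrete maximum principle (lower bound version): a finite family of ODE
differential inequalities coupled through nonnegative coefficients, compared
against the scalar ODE `φ' = Φ(φ)` with the same initial bound. -/
theorem stmt_0 {V : Type*} [Fintype V] [Nonempty V]
    (T : EReal) (hT : 0 < T)
    (C₁ : ℝ) (f f' : V → ℝ → ℝ)
    (a : V → V → ℝ → ℝ) (Φ : ℝ → ℝ)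
    (S : Set ℝ) (hS : S = {t : ℝ | 0 ≤ t ∧ (t : EReal) < T})
    (hderiv : ∀ i, ∀ t ∈ S, HasDerivWithinAt (f i) (f' i t) S t)
    (hacont : ∀ i j, ContinuousOn (a i j) S)
    (hanonneg : ∀ i j, ∀ t ∈ S, 0 ≤ a i j t)
    (hΦ : LocallyLipschitz Φ)
    (hineq : ∀ i, ∀ t ∈ S, f' i t ≥ (∑ j, a i j t * (f j t - f i t)) + Φ (f i t))
    (hinit : ∀ i, f i 0 ≥ C₁)
    (φ : ℝ → ℝ)
    (hφderiv : ∀ t ∈ S, HasDerivWithinAt φ (Φ (φ t)) S t)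
    (hφ0 : φ 0 = C₁) :
    ∀ i, ∀ t ∈ S, f i t ≥ φ t := by
  intro i₀ t₀ ht₀
  have ht₀' : 0 ≤ t₀ ∧ (t₀ : EReal) < T := by rwa [hS] at ht₀
  have hsub : Icc 0 t₀ ⊆ S := by
    intro t ht
    rw [hS]
    exact ⟨ht.1, lt_of_le_of_lt (EReal.coe_le_coe_iff.2 ht.2) ht₀'.2⟩
  -- continuity of the data on [0, t₀]
  have hcontf : ∀ j, ContinuousOn (f j) (Icc 0 t₀) := fun j =>
    fun t ht => ((hderiv j t (hsub ht)).continuousWithinAt).mono hsub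
  have hcontφ : ContinuousOn φ (Icc 0 t₀) := fun t ht =>
    ((hφderiv t (hsub ht)).continuousWithinAt).mono hsub
  -- a compact set containing all relevant values
  set K : Set ℝ := (⋃ j, f j '' Icc 0 t₀) ∪ φ '' Icc 0 t₀ with hK
  have hKc : IsCompact K := by
    apply IsCompact.union
    · exact isCompact_iUnion (fun j => isCompact_Icc.image_of_continuousOn (hcontf j))
    · exact isCompact_Icc.image_of_continuousOn hcontφ
  obtain ⟨L, hL0, hLip⟩ := locallyLipschitz_lipschitzOn_compact hΦ hKc
  have hfK : ∀ j, ∀ t ∈ Icc (0:ℝ) t₀, f j t ∈ K := fun j t ht =>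
    Or.inl (mem_iUnion.2 ⟨j, mem_image_of_mem _ ht⟩)
  have hφK : ∀ t ∈ Icc (0:ℝ) t₀, φ t ∈ K := fun t ht => Or.inr (mem_image_of_mem _ ht)
  -- Key claim via an ε-perturbation and a first-crossing argument
  have key : ∀ ε > 0, ∀ t ∈ Icc (0:ℝ) t₀, ∀ j,
      0 < f j t - φ t + ε * Real.exp ((L + 1) * t) := by
    intro ε hε
    by_contra hcon
    push_neg at hcon
    obtain ⟨tb, htb, jb, hjb⟩ := hcon
    set h : V → ℝ → ℝ := fun j t => f j t - φ t + ε * Real.exp ((L + 1) * t) with hh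
    have hconth : ∀ j, ContinuousOn (h j) (Icc 0 t₀) := by
      intro j
      exact ((hcontf j).sub hcontφ).add
        ((continuous_const.mul (Real.continuous_exp.comp (continuous_const.mul continuous_id))).continuousOn)
    set A : Set ℝ := ⋃ j, (Icc 0 t₀ ∩ (h j) ⁻¹' Iic 0) with hA
    have hAne : A.Nonempty := ⟨tb, mem_iUnion.2 ⟨jb, htb, hjb⟩⟩
    have hAclosed : IsClosed A := by
      apply isClosed_iUnion_of_finite
      intro j
      exact (hconth j).preimage_isClosed_of_isClosed isClosed_Icc isClosed_Iic
    have hAbdd : BddBelow A := by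
      refine ⟨0, fun t ht => ?_⟩
      obtain ⟨j, htj⟩ := mem_iUnion.1 ht
      exact htj.1.1
    set ts := sInf A with hts
    have htsA : ts ∈ A := hAclosed.csInf_mem hAne hAbdd
    obtain ⟨i, htsIcc, htsle⟩ : ∃ i, ts ∈ Icc 0 t₀ ∧ h i ts ≤ 0 := by
      obtain ⟨j, htj⟩ := mem_iUnion.1 htsA
      exact ⟨j, htj.1, htj.2⟩
    have hpos0 : ∀ j, 0 < h j 0 := by
      intro j
      have := hinit j
      simp only [hh, mul_zero, Real.exp_zero, mul_one, hφ0]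
      linarith
    have hts0 : 0 < ts := by
      rcases lt_or_eq_of_le htsIcc.1 with hlt | heq
      · exact hlt
      · exact absurd htsle (by rw [← heq]; linarith [hpos0 i])
    have hIoo : ∀ t ∈ Ioo (0:ℝ) ts, ∀ j, 0 < h j t := by
      intro t ht j
      by_contra hle
      push_neg at hle
      have : t ∈ A := mem_iUnion.2 ⟨j, ⟨ht.1.le, ht.2.le.trans htsIcc.2⟩, hle⟩
      exact absurd (csInf_le hAbdd this) (not_le.2 ht.2)
    have hIooIcc : Ioo (0:ℝ) ts ⊆ Icc 0 t₀ := fun t ht => ⟨ht.1.le, ht.2.le.trans htsIcc.2⟩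
    haveI : (𝓝[Ioo (0:ℝ) ts] ts).NeBot := right_nhdsWithin_Ioo_neBot hts0
    -- h j ts ≥ 0 for all j, by continuity from the left
    have hge : ∀ j, 0 ≤ h j ts := by
      intro j
      have htd : Tendsto (h j) (𝓝[Ioo (0:ℝ) ts] ts) (𝓝 (h j ts)) :=
        (((hconth j) ts htsIcc).mono hIooIcc)
      exact ge_of_tendsto htd
        (eventually_of_mem self_mem_nhdsWithin fun t ht => (hIoo t ht j).le)
    have hzero : h i ts = 0 := le_antisymm htsle (hge i)
    -- derivative of h i within S at ts
    set e : ℝ := Real.exp ((L + 1) * ts) with he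
    have hepos : 0 < e := Real.exp_pos _
    have hexp : HasDerivAt (fun t => ε * Real.exp ((L + 1) * t)) (ε * (Real.exp ((L+1)*ts) * (L+1))) ts := by
      have h1 : HasDerivAt (fun t : ℝ => (L + 1) * t) (L + 1) ts := by
        simpa using (hasDerivAt_id ts).const_mul (L + 1)
      exact (h1.exp).const_mul ε
    have htsS : ts ∈ S := hsub htsIcc
    set D : ℝ := f' i ts - Φ (φ ts) + ε * (e * (L + 1)) with hD
    have hDeriv : HasDerivWithinAt (h i) D S ts := by
      exact ((hderiv i ts htsS).sub (hφderiv ts htsS)).add (hexp.hasDerivWithinAt)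
    -- D ≤ 0 from the slope from the left
    have hDle : D ≤ 0 := by
      have hmono : HasDerivWithinAt (h i) D (Ioo 0 ts) ts :=
        hDeriv.mono (fun t ht => hsub (hIooIcc ht))
      rw [hasDerivWithinAt_iff_tendsto_slope,
        diff_singleton_eq_self (fun hmem => lt_irrefl ts hmem.2)] at hmono
      refine le_of_tendsto hmono (eventually_of_mem self_mem_nhdsWithin fun t ht => ?_)
      have hnum : 0 < h i t := hIoo t ht i
      have hden : t - ts < 0 := by linarith [ht.2]
      rw [slope_def_field]
      rw [div_nonpos_iff]
      left
      constructor
      · rw [hzero]; linarith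
      · linarith
    -- D > 0 from the differential inequality
    have hfi : f i ts = φ ts - ε * e := by
      have := hzero
      simp only [hh, he] at this ⊢
      linarith
    have hsum : 0 ≤ ∑ j, a i j ts * (f j ts - f i ts) := by
      apply Finset.sum_nonneg
      intro j _
      apply mul_nonneg (hanonneg i j ts htsS)
      have h1 : f j ts - f i ts = h j ts - h i ts := by simp only [hh]; ring
      rw [h1, hzero]
      linarith [hge j]
    have hLb : |Φ (f i ts) - Φ (φ ts)| ≤ L * |f i ts - φ ts| :=
      hLip _ (hfK i ts htsIcc) _ (hφK ts htsIcc)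
    have habs : |f i ts - φ ts| = ε * e := by
      rw [hfi]
      rw [abs_of_nonpos (by nlinarith)]
      ring
    have hΦlb : Φ (f i ts) - Φ (φ ts) ≥ -(L * (ε * e)) := by
      rw [habs] at hLb
      have := neg_le_of_abs_le hLb
      linarith
    have hf'lb : f' i ts ≥ (∑ j, a i j ts * (f j ts - f i ts)) + Φ (f i ts) := hineq i ts htsS
    have hDpos : 0 < D := by
      have hr : ε * (e * (L + 1)) = L * (ε * e) + ε * e := by ring
      have : 0 < ε * e := mul_pos hε hepos
      rw [hD, hr]
      nlinarith
    linarith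
  -- conclude by letting ε → 0
  by_contra hcon
  push_neg at hcon
  set c : ℝ := Real.exp ((L + 1) * t₀) with hc
  have hcpos : 0 < c := Real.exp_pos _
  set ε : ℝ := (φ t₀ - f i₀ t₀) / c with hε
  have hεpos : 0 < ε := div_pos (by linarith) hcpos
  have := key ε hεpos t₀ ⟨ht₀'.1, le_refl t₀⟩ i₀
  rw [show ε * Real.exp ((L + 1) * t₀) = φ t₀ - f i₀ t₀ by
    rw [hε, ← hc]; field_simp] at this
  linarith
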